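/- Let (X, P) be a conically stratified space and S ⊆ P any subset. Then the stratified space (X_S, S) (the preimage of S with induced stratification) is again conically stratified. -/

import Mathlib

/-- The Alexandroff topology on a poset `P`: the open sets are exactly the
upward closed subsets of `P`. -/
def alexandroff (P : Type*) [Preorder P] : TopologicalSpace P where
  IsOpen S := IsUpperSet S
  isOpen_univ := isUpperSet_univ
  isOpen_inter _ _ hs ht := hs.inter ht
  isOpen_sUnion _ h := isUpperSet_sUnion h

/-- The open cone `C(Y) = {*} ⊔ (Y × ℝ_{>0})` on a topological space `Y`;
the cone point is `none`. -/
def Cone' (Y : Type) : Type := Option (Y × {t : ℝ // 0 < t})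

/-- The cone topology on `C(Y)`: a subset `U` is open iff its trace on
`Y × ℝ_{>0}` is open and, if the cone point belongs to `U`, then
`{*} ⊔ (Y × (0, ε)) ⊆ U` for some `ε > 0`. -/
def coneTopology (Y : Type) [TopologicalSpace Y] : TopologicalSpace (Cone' Y) where
  IsOpen U := IsOpen {p : Y × {t : ℝ // 0 < t} | some p ∈ U} ∧
    (none ∈ U → ∃ ε > (0 : ℝ), ∀ (y : Y) (t : {t : ℝ // 0 < t}), t.1 < ε → some (y, t) ∈ U)
  isOpen_univ := ⟨isOpen_univ, fun _ => ⟨1, one_pos, fun _ _ _ => trivial⟩⟩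
  isOpen_inter := by
    rintro U V ⟨hU1, hU2⟩ ⟨hV1, hV2⟩
    refine ⟨hU1.inter hV1, ?_⟩
    rintro ⟨hnU, hnV⟩
    obtain ⟨ε₁, hε₁, h₁⟩ := hU2 hnU
    obtain ⟨ε₂, hε₂, h₂⟩ := hV2 hnV
    exact ⟨min ε₁ ε₂, lt_min hε₁ hε₂, fun y t ht =>
      ⟨h₁ y t (lt_of_lt_of_le ht (min_le_left _ _)),
       h₂ y t (lt_of_lt_of_le ht (min_le_right _ _))⟩⟩
  isOpen_sUnion := by
    intro S hS
    constructor
    · have h : {p : Y × {t : ℝ // 0 < t} | some p ∈ ⋃₀ S} =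
        ⋃ U ∈ S, {p | some p ∈ U} := by
        ext p
        simp only [Set.mem_sUnion, Set.mem_iUnion, Set.mem_setOf_eq, exists_prop]
        tauto
      rw [h]
      exact isOpen_biUnion fun U hU => (hS U hU).1
    · rintro ⟨U, hUS, hnU⟩
      obtain ⟨ε, hε, h⟩ := (hS U hUS).2 hnU
      exact ⟨ε, hε, fun y t ht => ⟨U, hUS, h y t ht⟩⟩
  

open Topology

/-- `(X, s : X → P)` is conically stratified: every point `x` lying over `a = s x` admits
a conical chart, i.e. there are a topological space `Z`, a stratified space
`(Y, g : Y → P_{> a})` and a map `φ : Z × C(Y) → X` of stratified spaces (over `P_{≥ a}`)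
inducing a homeomorphism of `Z × C(Y)` onto an open neighbourhood of `x` in `X`. -/
lemma isOpen_cone_iff {Y : Type} [tY : TopologicalSpace Y] (U : Set (Cone' Y)) :
    IsOpen[coneTopology Y] U ↔ (IsOpen {p : Y × {t : ℝ // 0 < t} | some p ∈ U} ∧
      (none ∈ U → ∃ ε > (0 : ℝ), ∀ (y : Y) (t : {t : ℝ // 0 < t}), t.1 < ε →
        some (y, t) ∈ U)) := Iff.rfl

lemma cone_inducing {Y : Type} [tY : TopologicalSpace Y] (p : Y → Prop) :
    @IsInducing (Cone' {y : Y // p y}) (Cone' Y) (coneTopology _) (coneTopology Y)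
      (Option.map (Prod.map Subtype.val id)) := by
  letI : TopologicalSpace (Cone' {y // p y}) := coneTopology _
  letI : TopologicalSpace (Cone' Y) := coneTopology Y
  constructor
  rw [TopologicalSpace.ext_iff]
  intro U
  show IsOpen[coneTopology _] U ↔ ∃ t, IsOpen[coneTopology Y] t ∧
    (Option.map (Prod.map Subtype.val id)) ⁻¹' t = U
  have hmap : IsInducing (Prod.map (Subtype.val : {y // p y} → Y)
      (id : {t : ℝ // 0 < t} → {t : ℝ // 0 < t})) :=
    IsInducing.subtypeVal.prodMap IsInducing.id
  constructor
  · rintro ⟨hU1, hU2⟩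
    obtain ⟨V₁, hV₁, hpre⟩ := hmap.isOpen_iff.mp hU1
    by_cases hn : (none : Cone' {y // p y}) ∈ U
    · obtain ⟨ε, hε, hε'⟩ := hU2 hn
      refine ⟨insert none {c : Cone' Y | ∃ q, c = some q ∧ (q ∈ V₁ ∨ q.2.1 < ε)}, ⟨?_, ?_⟩, ?_⟩
      · have h2 : IsOpen {q : Y × {t : ℝ // 0 < t} | q.2.1 < ε} :=
          isOpen_lt (continuous_subtype_val.comp continuous_snd) continuous_const
        convert hV₁.union h2 using 1
        ext q
        simp only [Set.mem_setOf_eq, Set.mem_insert_iff, Set.mem_union]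
        constructor
        · rintro (h | ⟨q', hq', h⟩)
          · exact absurd h (by simp)
          · replace hq' := Option.some.inj hq'
            subst hq'
            exact h
        · intro h
          exact Or.inr ⟨q, rfl, h⟩
      · exact fun _ => ⟨ε, hε, fun y t ht => Or.inr ⟨(y, t), rfl, Or.inr ht⟩⟩
      · ext c
        match c with
        | none =>
          constructor
          · intro _; exact hn
          · intro _; exact Set.mem_insert _ _
        | some yt =>
          obtain ⟨y, t⟩ := yt
          show ((some (Prod.map Subtype.val id (y, t)) : Option (Y × {t : ℝ // 0 < t})) = none ∨
            ∃ q : Y × {t : ℝ // 0 < t}, (some (Prod.map Subtype.val id (y, t)) : Option (Y × {t : ℝ // 0 < t})) = some q ∧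
              (q ∈ V₁ ∨ q.2.1 < ε)) ↔ some (y, t) ∈ U
          constructor
          · rintro (h | ⟨q, hq, h⟩)
            · exact absurd h (by simp)
            · rw [Option.some_inj] at hq
              subst hq
              rcases h with h | h
              · have h3 : (y, t) ∈ Prod.map (Subtype.val) id ⁻¹' V₁ := h
                rw [hpre] at h3
                exact h3
              · exact hε' y t h
          · intro h
            have h3 : (y, t) ∈ Prod.map (Subtype.val) id ⁻¹' V₁ := by rw [hpre]; exact h
            exact Or.inr ⟨Prod.map Subtype.val id (y, t), rfl, Or.inl h3⟩
    · refine ⟨{c : Cone' Y | ∃ q, c = some q ∧ q ∈ V₁}, ⟨?_, ?_⟩, ?_⟩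
      · convert hV₁ using 1
        ext q
        simp only [Set.mem_setOf_eq]
        constructor
        · rintro ⟨q', hq', h⟩
          replace hq' := Option.some.inj hq'
          subst hq'
          exact h
        · intro h
          exact ⟨q, rfl, h⟩
      · rintro ⟨q, hq, -⟩
        exact absurd hq (by simp)
      · ext c
        match c with
        | none =>
          show (∃ q : Y × {t : ℝ // 0 < t}, (none : Option (Y × {t : ℝ // 0 < t})) = some q ∧ q ∈ V₁) ↔ none ∈ U
          constructor
          · rintro ⟨q, hq, -⟩
            exact absurd hq (by simp)
          · intro h
            exact absurd h hn
        | some yt =>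
          obtain ⟨y, t⟩ := yt
          show (∃ q : Y × {t : ℝ // 0 < t}, (some (Prod.map Subtype.val id (y, t)) : Option (Y × {t : ℝ // 0 < t})) = some q ∧ q ∈ V₁) ↔
            some (y, t) ∈ U
          constructor
          · rintro ⟨q, hq, h⟩
            rw [Option.some_inj] at hq
            subst hq
            have h3 : (y, t) ∈ Prod.map (Subtype.val) id ⁻¹' V₁ := h
            rw [hpre] at h3
            exact h3
          · intro h
            have h3 : (y, t) ∈ Prod.map (Subtype.val) id ⁻¹' V₁ := by rw [hpre]; exact h
            exact ⟨Prod.map Subtype.val id (y, t), rfl, h3⟩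
  · rintro ⟨V, ⟨hV1, hV2⟩, rfl⟩
    constructor
    · have heq : {q : {y // p y} × {t : ℝ // 0 < t} |
          some q ∈ Option.map (Prod.map Subtype.val id) ⁻¹' V} =
          Prod.map (Subtype.val) id ⁻¹' {q : Y × {t : ℝ // 0 < t} | some q ∈ V} := rfl
      show IsOpen (Prod.map (Subtype.val : {y // p y} → Y) (id : {t : ℝ // 0 < t} → {t : ℝ // 0 < t}) ⁻¹'
        {q : Y × {t : ℝ // 0 < t} | some q ∈ V})
      exact (hV1.preimage (continuous_subtype_val.prodMap continuous_id))
    · intro hn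
      obtain ⟨ε, hε, hε'⟩ := hV2 hn
      exact ⟨ε, hε, fun y t ht => hε' y.1 t ht⟩

def IsConicallyStratified {X : Type} [TopologicalSpace X] {P : Type} [PartialOrder P]
    (s : X → P) : Prop :=
  ∀ x : X, ∃ (Z : Type) (tZ : TopologicalSpace Z) (Y : Type) (tY : TopologicalSpace Y)
    (g : Y → {b : P // s x < b}) (φ : Z × Cone' Y → X),
      (@Continuous Y _ tY (alexandroff _) g) ∧
      (@IsOpenEmbedding (Z × Cone' Y) X
        (@instTopologicalSpaceProd Z (Cone' Y) tZ (@coneTopology Y tY)) _ φ) ∧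
      x ∈ Set.range φ ∧
      (∀ (z : Z) (c : Cone' Y),
        s (φ (z, c)) = Option.elim c (s x) (fun p => (g p.1).1))

/-- Let `(X, P)` be a conically stratified space and `S ⊆ P` any subset.
Then the stratified space `(X_S, S)` (the preimage of `S` with the induced stratification)
is again conically stratified. -/
theorem stmt12 {X : Type} [TopologicalSpace X] {P : Type} [PartialOrder P]
    (s : X → P) (hs : @Continuous X P _ (alexandroff P) s)
    (hX : IsConicallyStratified s) (S : Set P) :
    IsConicallyStratified (fun x : {x : X // s x ∈ S} => (⟨s x.1, x.2⟩ : S)) := by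
  intro x
  obtain ⟨Z, tZ, Y, tY, g, φ, hg, hφ, hx, hsφ⟩ := hX x.1
  letI := tZ
  letI := tY
  letI : TopologicalSpace (Cone' Y) := coneTopology Y
  letI : TopologicalSpace (Cone' {y : Y // (g y).1 ∈ S}) :=
    coneTopology {y : Y // (g y).1 ∈ S}
  set ιc : Cone' {y : Y // (g y).1 ∈ S} → Cone' Y :=
    Option.map (Prod.map Subtype.val id) with hιcdef
  set ψ : Z × Cone' {y : Y // (g y).1 ∈ S} → Z × Cone' Y := Prod.map id ιc with hψdef
  have hmem : ∀ w : Z × Cone' {y : Y // (g y).1 ∈ S}, s (φ (ψ w)) ∈ S := by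
    rintro ⟨z, (_ | ⟨y, t⟩)⟩
    · have h : s (φ (ψ (z, none))) = s x.1 := hsφ z none
      rw [h]
      exact x.2
    · have h : s (φ (ψ (z, some (y, t)))) = (g y.1).1 := hsφ z (some (y.1, t))
      rw [h]
      exact y.2
  set g' : {y : Y // (g y).1 ∈ S} → {b : S // (⟨s x.1, x.2⟩ : S) < b} :=
    fun y => ⟨⟨(g y.1).1, y.2⟩, Subtype.mk_lt_mk.mpr (g y.1).2⟩ with hg'def
  set φ' : Z × Cone' {y : Y // (g y).1 ∈ S} → {x : X // s x ∈ S} :=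
    fun w => ⟨φ (ψ w), hmem w⟩ with hφ'def
  have hembι : IsEmbedding ιc := by
    constructor
    · exact cone_inducing (fun y => (g y).1 ∈ S)
    · exact Option.map_injective (Subtype.val_injective.prodMap Function.injective_id)
  have hembψ : IsEmbedding ψ := IsEmbedding.id.prodMap hembι
  have hcomp : Subtype.val ∘ φ' = φ ∘ ψ := rfl
  have hcontφ' : Continuous φ' :=
    Continuous.subtype_mk (hφ.continuous.comp hembψ.continuous) _
  have hembφ' : IsEmbedding φ' := by
    refine IsEmbedding.of_comp hcontφ' continuous_subtype_val ?_
    rw [hcomp]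
    exact hφ.isEmbedding.comp hembψ
  have hrange : Set.range φ' = Subtype.val ⁻¹' (Set.range φ) := by
    ext w
    constructor
    · rintro ⟨w', rfl⟩
      exact ⟨ψ w', rfl⟩
    · rintro ⟨⟨z, c⟩, hc⟩
      match c with
      | none => exact ⟨(z, none), Subtype.ext hc⟩
      | some q =>
        have hq : (g q.1).1 ∈ S := by
          have h1 := hsφ z (some q)
          simp only [Option.elim] at h1
          rw [hc] at h1
          rw [← h1]
          exact w.2
        refine ⟨(z, some (⟨q.1, hq⟩, q.2)), Subtype.ext ?_⟩
        exact hc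
  refine ⟨Z, tZ, {y : Y // (g y).1 ∈ S}, instTopologicalSpaceSubtype, g', φ', ?_, ?_, ?_, ?_⟩
  · rw [continuous_def]
    intro U hU
    have hU' : IsUpperSet U := hU
    show ∃ t : Set Y, IsOpen t ∧ Subtype.val ⁻¹' t = g' ⁻¹' U
    refine ⟨g ⁻¹' {b : {b : P // s x.1 < b} |
      ∃ c : {b : S // (⟨s x.1, x.2⟩ : S) < b}, c ∈ U ∧ (c.1 : P) ≤ b.1}, ?_, ?_⟩
    · refine (continuous_def.mp hg) _ ?_
      show IsUpperSet _
      rintro b b' hbb' ⟨c, hcU, hcb⟩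
      exact ⟨c, hcU, hcb.trans hbb'⟩
    · ext y
      constructor
      · rintro ⟨c, hcU, hcb⟩
        refine hU' ?_ hcU
        exact hcb
      · intro h
        exact ⟨g' y, h, le_refl _⟩
  · exact ⟨hembφ', hrange ▸ hφ.isOpen_range.preimage continuous_subtype_val⟩
  · rw [hrange]
    exact hx
  · rintro z (_ | ⟨y, t⟩)
    · exact Subtype.ext (hsφ z none)
    · exact Subtype.ext (hsφ z (some (y.1, t)))
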